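/- arXiv:2006.06635 — 2 statements merged into one kernel-verified Lean document; each statement's English description precedes it below -/
import Mathlib

section
/- Let Γ ∈ ℝ^{k×k} and define the linear operator H on k×k matrices by (H M)_{ab} = Γ_{ab} M_{ab} + M_{ba}. If Γ_{ab} Γ_{ba} ≠ 1 for all a, b, then H is invertible, and its inverse is given by (H⁻¹ M)_{ab} = (Γ_{ba} M_{ab} - M_{ba}) / (Γ_{ab} Γ_{ba} - 1). -/
open Matrix

/-- For Γ ∈ ℝ^{k×k}, the operator (H M)_{ab} = Γ_{ab} M_{ab} + M_{ba} is invertible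
when Γ_{ab}Γ_{ba} ≠ 1 for all a, b, with inverse
(H⁻¹ M)_{ab} = (Γ_{ba} M_{ab} - M_{ba}) / (Γ_{ab} Γ_{ba} - 1). -/
theorem stmt_2 (k : ℕ) (Γ : Matrix (Fin k) (Fin k) ℝ)
    (hΓ : ∀ a b, Γ a b * Γ b a ≠ 1)
    (H Hinv : Matrix (Fin k) (Fin k) ℝ → Matrix (Fin k) (Fin k) ℝ)
    (hH : ∀ M a b, H M a b = Γ a b * M a b + M b a)
    (hHinv : ∀ M a b, Hinv M a b = (Γ b a * M a b - M b a) / (Γ a b * Γ b a - 1)) :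
    Function.Bijective H ∧ Function.LeftInverse Hinv H ∧ Function.RightInverse Hinv H := by
  have hne : ∀ a b, Γ a b * Γ b a - 1 ≠ 0 := fun a b => sub_ne_zero_of_ne (hΓ a b)
  have hleft : Function.LeftInverse Hinv H := by
    intro M
    ext a b
    rw [hHinv, hH, hH, div_eq_iff (hne a b)]
    ring
  have hright : Function.RightInverse Hinv H := by
    intro M
    ext a b
    rw [hH, hHinv, hHinv]
    rw [mul_comm (Γ b a) (Γ a b), mul_div_assoc', ← add_div, div_eq_iff (hne a b)]
    ring
  exact ⟨⟨hleft.injective, hright.surjective⟩, hleft, hright⟩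
end

section
/- Suppose s and s' are ℝᵏ-valued random vectors, n¹,…,nᵐ and n'¹,…,n'ᵐ are Gaussian random vectors with all of s', n'¹,…,n'ᵐ, n¹,…,nᵐ mutually independent as appropriate, and that for each i there are scale-permutation matrices Pⁱ with s + nⁱ = Pⁱ(s' + n'ⁱ) almost surely. If the components of s' are non-Gaussian, then all the Pⁱ are equal: P¹ = P² = ⋯ = Pᵐ. -/
open Matrix MeasureTheory ProbabilityTheory

/-- A real random variable is Gaussian (possibly degenerate). -/
def IsGaussianRV {Ω : Type*} [MeasureSpace Ω] (X : Ω → ℝ) : Prop :=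
  ∃ (μ : ℝ) (v : NNReal), Measure.map X ℙ = gaussianReal μ v

/-- A random vector is Gaussian if every linear functional of it is Gaussian. -/
def IsGaussianVec {Ω : Type*} [MeasureSpace Ω] {k : ℕ} (X : Ω → Fin k → ℝ) : Prop :=
  ∀ c : Fin k → ℝ, IsGaussianRV (fun ω => ∑ j, c j * X ω j)

/-- A scale-permutation matrix: product of an invertible diagonal matrix and a
permutation matrix. -/
def IsScalePerm {k : ℕ} (P : Matrix (Fin k) (Fin k) ℝ) : Prop :=
  ∃ (σ : Equiv.Perm (Fin k)) (d : Fin k → ℝ), (∀ j, d j ≠ 0) ∧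
    ∀ a b, P a b = if a = σ b then d b else 0

lemma aux_self_indep_const {Ω : Type*} [MeasureSpace Ω] [IsProbabilityMeasure (ℙ : Measure Ω)]
    {X : Ω → ℝ} (hX : Measurable X) (h : IndepFun X X ℙ) :
    ∃ c, X =ᵐ[ℙ] fun _ => c := by
  set ν := Measure.map X ℙ with hν
  have hprob : IsProbabilityMeasure ν := Measure.isProbabilityMeasure_map hX.aemeasurable
  have hmap : Measure.map (fun ω => (X ω, X ω)) ℙ = ν.prod ν :=
    (indepFun_iff_map_prod_eq_prod_map_map hX.aemeasurable hX.aemeasurable).mp h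
  have hdiag : MeasurableSet {p : ℝ × ℝ | p.1 = p.2} :=
    measurableSet_eq_fun measurable_fst measurable_snd
  have h1 : ν.prod ν {p : ℝ × ℝ | p.1 = p.2} = 1 := by
    rw [← hmap, Measure.map_apply (hX.prodMk hX) hdiag]
    simp
  rw [Measure.prod_apply hdiag] at h1
  have hsingle : ∀ x : ℝ, Prod.mk x ⁻¹' {p : ℝ × ℝ | p.1 = p.2} = {x} := by
    intro x; ext y; simp [eq_comm]
  have hmeas : Measurable fun x : ℝ => ν {x} := by
    have := measurable_measure_prodMk_left (ν := ν) hdiag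
    simpa [hsingle] using this
  have h1' : ∫⁻ x, ν {x} ∂ν = 1 := by
    rw [← h1]; exact lintegral_congr fun x => by rw [hsingle]
  have hle : ∀ x : ℝ, ν {x} ≤ 1 := fun x => prob_le_one
  have hzero : ∫⁻ x, (1 - ν {x}) ∂ν = 0 := by
    rw [lintegral_sub hmeas (by rw [h1']; exact ENNReal.one_ne_top)
      (Filter.Eventually.of_forall hle)]
    simp [h1']
  have hae : ∀ᵐ x ∂ν, ν {x} = 1 := by
    have := (lintegral_eq_zero_iff (measurable_const.sub hmeas)).mp hzero
    filter_upwards [this] with x hx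
    simp only [Pi.sub_apply, Pi.one_apply, Pi.zero_apply] at hx
    exact le_antisymm (hle x) (tsub_eq_zero_iff_le.mp hx)
  have : Filter.NeBot (ae ν) := ae_neBot.mpr (IsProbabilityMeasure.ne_zero ν)
  obtain ⟨c, hc⟩ := hae.exists
  refine ⟨c, ?_⟩
  have hc' : ℙ (X ⁻¹' {c}) = 1 := by
    rw [← Measure.map_apply hX (measurableSet_singleton c)]; exact hc
  rw [Filter.EventuallyEq, ae_iff]
  have : {ω | ¬ X ω = c} = (X ⁻¹' {c})ᶜ := by ext ω; simp
  rw [this, measure_compl (hX (measurableSet_singleton c)) (measure_ne_top _ _), hc']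
  simp

lemma aux_const_gaussian {Ω : Type*} [MeasureSpace Ω] [IsProbabilityMeasure (ℙ : Measure Ω)]
    {X : Ω → ℝ} {c : ℝ} (h : X =ᵐ[ℙ] fun _ => c) : IsGaussianRV X := by
  refine ⟨c, 0, ?_⟩
  rw [Measure.map_congr h, gaussianReal_zero_var]
  simp [Measure.map_const]

lemma scalePerm_row {k : ℕ} (σ : Equiv.Perm (Fin k)) (d : Fin k → ℝ)
    (v : Fin k → ℝ) (a : Fin k) :
    ∑ b, (if a = σ b then d b else 0) * v b = d (σ.symm a) * v (σ.symm a) := by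
  rw [Finset.sum_eq_single (σ.symm a)]
  · simp
  · intro b _ hb
    have : ¬ a = σ b := fun h => hb (by simp [h])
    simp [this]
  · simp

/-- If s + nⁱ = Pⁱ(s' + n'ⁱ) a.s. with scale-permutation matrices Pⁱ, Gaussian noises,
and s' with independent non-Gaussian components, then all the Pⁱ are equal. -/
theorem stmt_7 {Ω : Type*} [MeasureSpace Ω] [IsProbabilityMeasure (ℙ : Measure Ω)]
    (k m : ℕ) (s s' : Ω → Fin k → ℝ) (n n' : Fin m → Ω → Fin k → ℝ)
    (hs'_meas : Measurable s') (hn_meas : ∀ i, Measurable (n i))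
    (hn'_meas : ∀ i, Measurable (n' i))
    (hs'_comp_indep : iIndepFun (fun j ω => s' ω j) ℙ)
    (hs'_nongauss : ∀ j : Fin k, ¬ IsGaussianRV (fun ω => s' ω j))
    (hn_gauss : ∀ i, IsGaussianVec (n i)) (hn'_gauss : ∀ i, IsGaussianVec (n' i))
    (hfam_indep : iIndepFun
      (fun j : Option (Fin m ⊕ Fin m) => Option.elim j s' (Sum.elim n n')) ℙ)
    (P : Fin m → Matrix (Fin k) (Fin k) ℝ) (hP : ∀ i, IsScalePerm (P i))
    (heq : ∀ i, ∀ᵐ ω ∂ℙ, s ω + n i ω = (P i).mulVec (s' ω + n' i ω)) :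
    ∀ i j, P i = P j := by
  intro i j
  rcases eq_or_ne i j with rfl | hij
  · rfl
  obtain ⟨σi, di, hdi, hPi⟩ := hP i
  obtain ⟨σj, dj, hdj, hPj⟩ := hP j
  -- measurability of family
  have hfmeas : ∀ x : Option (Fin m ⊕ Fin m),
      Measurable (Option.elim x s' (Sum.elim n n')) := by
    rintro (_ | (x | x))
    exacts [hs'_meas, hn_meas x, hn'_meas x]
  -- the key row equality, a.e.
  have key : ∀ᵐ ω ∂ℙ, ∀ a : Fin k,
      di (σi.symm a) * s' ω (σi.symm a) - dj (σj.symm a) * s' ω (σj.symm a)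
      = n i ω a - n j ω a - di (σi.symm a) * n' i ω (σi.symm a)
        + dj (σj.symm a) * n' j ω (σj.symm a) := by
    filter_upwards [heq i, heq j] with ω h1 h2 a
    have e1 : s ω a + n i ω a
        = di (σi.symm a) * (s' ω (σi.symm a) + n' i ω (σi.symm a)) := by
      have := congrFun h1 a
      simp only [Pi.add_apply, Matrix.mulVec, dotProduct, hPi] at this
      rw [this]
      exact scalePerm_row σi di (fun b => s' ω b + n' i ω b) a
    have e2 : s ω a + n j ω a
        = dj (σj.symm a) * (s' ω (σj.symm a) + n' j ω (σj.symm a)) := by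
      have := congrFun h2 a
      simp only [Pi.add_apply, Matrix.mulVec, dotProduct, hPj] at this
      rw [this]
      exact scalePerm_row σj dj (fun b => s' ω b + n' j ω b) a
    nlinarith [e1, e2]
  -- per-row conclusion
  have hrow : ∀ a : Fin k, σi.symm a = σj.symm a ∧ di (σi.symm a) = dj (σi.symm a) := by
    intro a
    set b1 := σi.symm a with hb1
    set b2 := σj.symm a with hb2
    set d1 := di b1 with hd1
    set d2 := dj b2 with hd2
    set Z : Ω → ℝ := fun ω => d1 * s' ω b1 - d2 * s' ω b2 with hZ
    set G : Ω → ℝ := fun ω => n i ω a - n j ω a - d1 * n' i ω b1 + d2 * n' j ω b2 with hG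
    have hZG : Z =ᵐ[ℙ] G := by
      filter_upwards [key] with ω h using h a
    -- independence of Z and G
    have hZmeas : Measurable Z := by
      apply Measurable.sub <;> exact (measurable_const.mul ((measurable_pi_apply _).comp hs'_meas))
    have hindZG : IndepFun Z G ℙ := by
      classical
      have hbig := hfam_indep.indepFun_finset {none}
        ({some (Sum.inl i), some (Sum.inl j), some (Sum.inr i), some (Sum.inr j)} :
          Finset (Option (Fin m ⊕ Fin m))) (by simp) hfmeas
      have := hbig.comp
        (φ := fun v : ({none} : Finset (Option (Fin m ⊕ Fin m))) → Fin k → ℝ =>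
          d1 * v ⟨none, by simp⟩ b1 - d2 * v ⟨none, by simp⟩ b2)
        (ψ := fun v : ({some (Sum.inl i), some (Sum.inl j), some (Sum.inr i),
            some (Sum.inr j)} : Finset (Option (Fin m ⊕ Fin m))) → Fin k → ℝ =>
          v ⟨some (Sum.inl i), by simp⟩ a - v ⟨some (Sum.inl j), by simp⟩ a
          - d1 * v ⟨some (Sum.inr i), by simp⟩ b1 + d2 * v ⟨some (Sum.inr j), by simp⟩ b2)
        (by fun_prop) (by fun_prop)
      exact this
    have hindZZ : IndepFun Z Z ℙ := hindZG.congr (Filter.EventuallyEq.refl _ _) hZG.symm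
    obtain ⟨c, hc⟩ := aux_self_indep_const hZmeas hindZZ
    by_cases hb : b1 = b2
    · refine ⟨hb, ?_⟩
      by_contra hd
      have hd' : d1 - d2 ≠ 0 := by
        rw [hb1] at hd
        rw [hd1, hd2, ← hb]
        exact sub_ne_zero_of_ne hd
      apply hs'_nongauss b1
      apply aux_const_gaussian (c := c / (d1 - d2))
      filter_upwards [hc] with ω hω
      rw [hZ] at hω
      simp only at hω
      rw [← hb] at hω
      field_simp
      linarith [hω]
    · exfalso
      have hX1X2 : IndepFun (fun ω => s' ω b1) (fun ω => s' ω b2) ℙ :=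
        hs'_comp_indep.indepFun hb
      have hmeasX2 : Measurable fun y : ℝ => (c + d2 * y) / d1 := by fun_prop
      have hcomp : IndepFun (fun ω => s' ω b1)
          (fun ω => (c + d2 * s' ω b2) / d1) ℙ :=
        hX1X2.comp measurable_id hmeasX2
      have haeeq : (fun ω => (c + d2 * s' ω b2) / d1) =ᵐ[ℙ] fun ω => s' ω b1 := by
        filter_upwards [hc] with ω hω
        rw [hZ] at hω
        simp only at hω
        have : d1 ≠ 0 := hdi b1
        field_simp
        linarith [hω]
      have hself : IndepFun (fun ω => s' ω b1) (fun ω => s' ω b1) ℙ :=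
        hcomp.congr (Filter.EventuallyEq.refl _ _) haeeq
      obtain ⟨c', hc'⟩ := aux_self_indep_const
        ((measurable_pi_apply b1).comp hs'_meas) hself
      exact hs'_nongauss b1 (aux_const_gaussian hc')
  -- conclude matrix equality
  ext a b
  rw [hPi, hPj]
  obtain ⟨hσ, hd⟩ := hrow a
  by_cases h : σi.symm a = b
  · have h1 : a = σi b := by rw [← h]; simp
    have h2 : a = σj b := by rw [← h, hσ]; simp
    rw [if_pos h1, if_pos h2, ← h, hd, hσ]
  · have h1 : ¬ a = σi b := fun hh => h (by simp [hh])
    have h2 : ¬ a = σj b := fun hh => h (by rw [hσ, hh]; simp)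
    rw [if_neg h1, if_neg h2]
end
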